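/- Let D_K and P_K be the operators on ℝ[[x]] with kernel K(x,t) = e^{-x+t}, i.e., P_K(f) = e^{-x}∫₀ˣ e^t f(t)dt and D_K(f) = e^{-x}(e^x f)' = f + f' (termwise on power series). Then for every k ≥ 0, P_K^k(1) = Σ_{n≥k} (-1)^{n-k} C(n-1, k-1) xⁿ/n!, with the convention C(i,-1) = δ_{i,-1}, so in particular P_K^k(1) ∈ xᵏℝ[[x]] \ xᵏ⁺¹ℝ[[x]] for k ≥ 1. -/

import Mathlib

open PowerSeries

/-- Termwise integration on `ℝ⟦X⟧`. -/
noncomputable def integ (f : ℝ⟦X⟧) : ℝ⟦X⟧ :=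
  PowerSeries.mk fun n => if n = 0 then 0 else (PowerSeries.coeff (n - 1) f) / n

/-- The Volterra operator with kernel `e^{-x+t}`: `P_K(f) = e^{-x}·∫₀ˣ e^t f(t) dt`. -/
noncomputable def PK (f : ℝ⟦X⟧) : ℝ⟦X⟧ :=
  rescale (-1 : ℝ) (exp ℝ) * integ (exp ℝ * f)

open scoped PowerSeries

lemma deriv_integ (g : ℝ⟦X⟧) : d⁄dX ℝ (integ g) = g := by
  ext n
  rw [coeff_derivative]
  simp only [integ, coeff_mk, Nat.succ_ne_zero, if_false, Nat.add_sub_cancel]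
  have : ((n : ℝ) + 1) ≠ 0 := by positivity
  push_cast
  field_simp

lemma deriv_Eneg : d⁄dX ℝ (rescale (-1 : ℝ) (exp ℝ)) = -(rescale (-1 : ℝ) (exp ℝ)) := by
  ext n
  rw [coeff_derivative, map_neg, coeff_rescale, coeff_rescale, coeff_exp, coeff_exp]
  have h1 : ((n.factorial : ℝ)) ≠ 0 := by positivity
  have h2 : (((n + 1).factorial : ℝ)) ≠ 0 := by positivity
  rw [eq_ratCast, eq_ratCast, Nat.factorial_succ] at *
  push_cast at *
  field_simp
  ring

lemma Eneg_mul_exp : rescale (-1 : ℝ) (exp ℝ) * exp ℝ = 1 := by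
  rw [show rescale (-1 : ℝ) (exp ℝ) = evalNegHom (exp ℝ) from rfl, mul_comm]
  exact PowerSeries.exp_mul_exp_neg_eq_one

lemma deriv_PK (f : ℝ⟦X⟧) : d⁄dX ℝ (PK f) = f - PK f := by
  unfold PK
  rw [Derivation.leibniz, deriv_integ, deriv_Eneg, smul_eq_mul, smul_eq_mul,
    ← mul_assoc, Eneg_mul_exp, one_mul]
  ring

lemma coeff_PK_zero (f : ℝ⟦X⟧) : coeff 0 (PK f) = 0 := by
  have : constantCoeff (integ (exp ℝ * f)) = 0 := by
    simp [integ, ← coeff_zero_eq_constantCoeff]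
  rw [coeff_zero_eq_constantCoeff, PK, map_mul, this, mul_zero]

lemma coeff_PK_succ (f : ℝ⟦X⟧) (n : ℕ) :
    coeff (n + 1) (PK f) = (coeff n f - coeff n (PK f)) / (n + 1) := by
  have h := congrArg (coeff n) (deriv_PK f)
  rw [coeff_derivative, map_sub] at h
  have : ((n : ℝ) + 1) ≠ 0 := by positivity
  field_simp
  linarith [h]

/-- target coefficients -/
noncomputable def cc (k n : ℕ) : ℝ :=
  if k = 0 then (if n = 0 then (1 : ℝ) else 0)
  else if n < k then 0
  else (-1 : ℝ) ^ (n - k) * ((n - 1).choose (k - 1)) / n.factorial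

lemma cc_eval (k n : ℕ) (hk : k ≠ 0) (hn : k ≤ n) :
    cc k n = (-1 : ℝ) ^ (n - k) * ((n - 1).choose (k - 1)) / n.factorial := by
  simp [cc, hk, Nat.not_lt.mpr hn]

lemma cc_eval0 (k n : ℕ) (hk : k ≠ 0) (hn : n < k) : cc k n = 0 := by
  simp [cc, hk, hn]

lemma cc_zero (k : ℕ) : cc (k + 1) 0 = 0 :=
  cc_eval0 _ _ (Nat.succ_ne_zero k) (Nat.succ_pos k)

lemma cc_rec (k n : ℕ) : cc (k + 1) (n + 1) = (cc k n - cc (k + 1) n) / (n + 1) := by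
  rcases Nat.eq_zero_or_pos k with rfl | hkpos
  · rcases Nat.eq_zero_or_pos n with rfl | hn
    · norm_num [cc]
    · obtain ⟨m, rfl⟩ : ∃ m, n = m + 1 := ⟨n - 1, by omega⟩
      have e0 : cc 0 (m + 1) = 0 := by simp [cc]
      rw [e0, cc_eval 1 (m + 1 + 1) one_ne_zero (by omega),
        cc_eval 1 (m + 1) one_ne_zero (by omega)]
      have s1 : m + 1 + 1 - 1 = m + 1 := by omega
      have s2 : m + 1 - 1 = m := by omega
      rw [s1, s2, Nat.choose_zero_right, Nat.choose_zero_right,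
        Nat.factorial_succ (m + 1)]
      have hf : (((m + 1).factorial : ℝ)) ≠ 0 := by positivity
      push_cast
      field_simp
      ring
  · have hkne : k ≠ 0 := by omega
    rcases lt_trichotomy n k with h | rfl | h
    · rw [cc_eval0 _ _ (Nat.succ_ne_zero k) (by omega), cc_eval0 _ _ hkne h,
        cc_eval0 _ _ (Nat.succ_ne_zero k) (by omega)]
      simp
    · rw [cc_eval (n + 1) (n + 1) (Nat.succ_ne_zero n) le_rfl,
        cc_eval n n hkne le_rfl, cc_eval0 (n + 1) n (Nat.succ_ne_zero n) (Nat.lt_succ_self n)]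
      simp only [Nat.sub_self, pow_zero, Nat.add_sub_cancel, Nat.choose_self,
        Nat.cast_one, one_mul, Nat.factorial_succ n, sub_zero]
      have hf : ((n.factorial : ℝ)) ≠ 0 := by positivity
      have : ((n : ℝ) + 1) ≠ 0 := by positivity
      push_cast
      field_simp
    · obtain ⟨d, rfl⟩ : ∃ d, n = k + d + 1 := ⟨n - k - 1, by omega⟩
      obtain ⟨j, rfl⟩ : ∃ j, k = j + 1 := ⟨k - 1, by omega⟩
      set k := j + 1 with hk
      rw [cc_eval (k + 1) (k + d + 1 + 1) (Nat.succ_ne_zero k) (by omega),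
        cc_eval k (k + d + 1) hkne (by omega),
        cc_eval (k + 1) (k + d + 1) (Nat.succ_ne_zero k) (by omega)]
      have s1 : k + d + 1 + 1 - (k + 1) = d + 1 := by omega
      have s2 : k + d + 1 - k = d + 1 := by omega
      have s3 : k + d + 1 - (k + 1) = d := by omega
      have s4 : k + d + 1 + 1 - 1 = k + d + 1 := by omega
      have s5 : k + d + 1 - 1 = k + d := by omega
      have s6 : k + 1 - 1 = k := by omega
      have s7 : k - 1 = j := by omega
      rw [s1, s2, s3, s4, s5, s6, s7]
      have pascal : (k + d + 1).choose (j + 1) = (k + d).choose j + (k + d).choose (j + 1) := by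
        have h' := Nat.choose_succ_succ (k + d) j
        simpa [Nat.succ_eq_add_one] using h'
      have hkk : k = j + 1 := hk
      rw [show k + d + 1 = (k + d) + 1 from rfl] at pascal
      rw [pascal]
      rw [Nat.factorial_succ (k + d + 1)]
      have hf : (((k + d + 1).factorial : ℝ)) ≠ 0 := by positivity
      push_cast
      field_simp
      ring

lemma coeff_iter (k : ℕ) : ∀ n, coeff n (PK^[k] 1) = cc k n := by
  induction k with
  | zero =>
    intro n
    simp [cc, coeff_one]
  | succ k ih =>
    intro n
    rw [Function.iterate_succ_apply']
    induction n with
    | zero => rw [coeff_PK_zero, cc_zero]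
    | succ n ihn => rw [coeff_PK_succ, ihn, ih n, cc_rec]

/-- `P_K^k(1) = Σ_{n≥k} (-1)^{n-k} C(n-1,k-1) xⁿ/n!` (with `C(i,-1) = δ_{i,-1}`),
and `P_K^k(1) ∈ xᵏℝ[[x]] \ xᵏ⁺¹ℝ[[x]]` for `k ≥ 1`. -/
theorem stmt18 :
    ∀ k : ℕ,
      (PK^[k] 1 = PowerSeries.mk fun n =>
        if k = 0 then (if n = 0 then (1 : ℝ) else 0)
        else if n < k then 0
        else (-1 : ℝ) ^ (n - k) * ((n - 1).choose (k - 1)) / n.factorial) ∧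
      (1 ≤ k → (X : ℝ⟦X⟧) ^ k ∣ PK^[k] 1 ∧ ¬ (X : ℝ⟦X⟧) ^ (k + 1) ∣ PK^[k] 1) := by
  intro k
  constructor
  · ext n
    rw [coeff_iter, coeff_mk]
    rfl
  · intro hk
    have hkne : k ≠ 0 := by omega
    constructor
    · rw [X_pow_dvd_iff]
      intro m hm
      rw [coeff_iter]
      exact cc_eval0 _ _ hkne hm
    · rw [X_pow_dvd_iff]
      push_neg
      refine ⟨k, Nat.lt_succ_self k, ?_⟩
      rw [coeff_iter, cc_eval k k hkne le_rfl]
      simp only [Nat.sub_self, pow_zero, Nat.choose_self, Nat.cast_one, one_mul]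
      positivity
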